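/- Let α > 1 be an irrational real number and t > 0. Then L_α(t) = L_1(αt) + (t/2)·D(αt) + R_α(t) + E_α(t), where D(s) = ∑_{n≥1} 1/(e^{ns} − 1), R_α(t) = ∑_{ℓ≥1} t·B̃₁(αℓ)/(e^{tαℓ} − 1), and E_α(t) = ∑_{ℓ≥1} ∫₀^{{αℓ}} ( ∫₀^u K((αℓ − v)t/2) / (αℓ − v)² dv ) du with K(u) = u²/sinh²(u). -/

import Mathlib

open Filter Topology Real Asymptotics

/-- `L_α(t) = -∑_{ℓ ≥ 1} log(1 - e^{-t⌊αℓ⌋})`. -/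
noncomputable def LBeatty (α : ℝ) (t : ℝ) : ℝ :=
  -∑' ℓ : ℕ, Real.log (1 - Real.exp (-t * (⌊α * (ℓ + 1)⌋ : ℤ)))

/-- `L₁(t) = -∑_{ℓ ≥ 1} log(1 - e^{-tℓ})`. -/
noncomputable def LOne (t : ℝ) : ℝ :=
  -∑' ℓ : ℕ, Real.log (1 - Real.exp (-t * (ℓ + 1)))

/-- `D(s) = ∑_{n ≥ 1} 1/(e^{ns} - 1)`. -/
noncomputable def DSum (s : ℝ) : ℝ :=
  ∑' n : ℕ, 1 / (Real.exp ((n + 1) * s) - 1)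

/-- `R_α(t) = ∑_{ℓ ≥ 1} t·B̃₁(αℓ)/(e^{tαℓ} - 1)`, with `B̃₁(x) = {x} - 1/2`. -/
noncomputable def RBeatty (α : ℝ) (t : ℝ) : ℝ :=
  ∑' ℓ : ℕ, t * (Int.fract (α * (ℓ + 1)) - 1 / 2) / (Real.exp (t * (α * (ℓ + 1))) - 1)

/-- `K(u) = u²/sinh²(u)` for `u ≠ 0`, with `K(0) = 1`. -/
noncomputable def KKer (u : ℝ) : ℝ :=
  if u = 0 then 1 else u ^ 2 / Real.sinh u ^ 2

/-- `E_α(t) = ∑_{ℓ ≥ 1} ∫₀^{{αℓ}} ∫₀^u K((αℓ - v)t/2)/(αℓ - v)² dv du`. -/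
noncomputable def EBeatty (α : ℝ) (t : ℝ) : ℝ :=
  ∑' ℓ : ℕ, ∫ u in (0 : ℝ)..Int.fract (α * (ℓ + 1)),
    ∫ v in (0 : ℝ)..u, KKer ((α * (ℓ + 1) - v) * t / 2) / (α * (ℓ + 1) - v) ^ 2

/-! ### Auxiliary lemmas -/

lemma exp_sub_one_pos' {s : ℝ} (hs : 0 < s) : 0 < Real.exp s - 1 := by
  have := Real.add_one_lt_exp (ne_of_gt hs); linarith

lemma one_sub_exp_pos' {s : ℝ} (hs : 0 < s) : 0 < 1 - Real.exp (-s) := by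
  have : Real.exp (-s) < 1 := Real.exp_lt_one_iff.mpr (by linarith)
  linarith

lemma hasDerivAt_inner (t x : ℝ) (ht : 0 < t) {v : ℝ} (hv : v < x) :
    HasDerivAt (fun v => t / (Real.exp (t * (x - v)) - 1))
      (t ^ 2 * Real.exp (t * (x - v)) / (Real.exp (t * (x - v)) - 1) ^ 2) v := by
  have hs : 0 < t * (x - v) := mul_pos ht (by linarith)
  have hne : Real.exp (t * (x - v)) - 1 ≠ 0 := ne_of_gt (exp_sub_one_pos' hs)
  have h1 : HasDerivAt (fun v : ℝ => t * (x - v)) (-t) v := by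
    simpa using ((hasDerivAt_id v).const_sub x).const_mul t
  have h2 : HasDerivAt (fun v : ℝ => Real.exp (t * (x - v)) - 1)
      (Real.exp (t * (x - v)) * (-t)) v := (h1.exp).sub_const 1
  have h3 := (hasDerivAt_const v t).div h2 hne
  refine h3.congr_deriv ?_
  field_simp
  ring

lemma hasDerivAt_g (t x : ℝ) (ht : 0 < t) {u : ℝ} (hu : u < x) :
    HasDerivAt (fun u => -Real.log (1 - Real.exp (-t * (x - u))))
      (t / (Real.exp (t * (x - u)) - 1)) u := by
  have hs : 0 < t * (x - u) := mul_pos ht (by linarith)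
  have hpos : 0 < 1 - Real.exp (-t * (x - u)) := by
    have := one_sub_exp_pos' hs; rwa [neg_mul]
  have h1 : HasDerivAt (fun u : ℝ => -t * (x - u)) t u := by
    simpa using ((hasDerivAt_id u).const_sub x).const_mul (-t)
  have h2 : HasDerivAt (fun u : ℝ => 1 - Real.exp (-t * (x - u)))
      (-(Real.exp (-t * (x - u)) * t)) u := (h1.exp).const_sub 1
  have h3 := (h2.log (ne_of_gt hpos)).neg
  refine h3.congr_deriv ?_
  have he : Real.exp (-t * (x - u)) = (Real.exp (t * (x - u)))⁻¹ := by
    rw [← Real.exp_neg]; ring_nf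
  rw [he]
  have h4 := Real.exp_ne_zero (t * (x - u))
  have h5 : Real.exp (t * (x - u)) - 1 ≠ 0 := ne_of_gt (exp_sub_one_pos' hs)
  field_simp

lemma KKer_eq (t x : ℝ) (ht : 0 < t) {v : ℝ} (hv : v < x) :
    KKer ((x - v) * t / 2) / (x - v) ^ 2
      = t ^ 2 * Real.exp (t * (x - v)) / (Real.exp (t * (x - v)) - 1) ^ 2 := by
  set w := (x - v) * t / 2 with hw
  have hxv : 0 < x - v := by linarith
  have hwpos : 0 < w := by positivity
  rw [KKer, if_neg (ne_of_gt hwpos)]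
  have h2w : t * (x - v) = 2 * w := by rw [hw]; ring
  have he : Real.exp (2 * w) = Real.exp w * Real.exp w := by
    rw [← Real.exp_add, two_mul]
  have hen : Real.exp (-w) = (Real.exp w)⁻¹ := Real.exp_neg w
  have hexpne := Real.exp_ne_zero w
  have hne : Real.exp w * Real.exp w - 1 ≠ 0 := by
    have : (0:ℝ) < Real.exp (2 * w) - 1 := exp_sub_one_pos' (by linarith)
    rw [he] at this; linarith
  rw [h2w, he, Real.sinh_eq, hen]
  have hw2 : w ^ 2 * 4 = (x - v) ^ 2 * t ^ 2 := by rw [hw]; ring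
  have h : Real.exp w - (Real.exp w)⁻¹ = (Real.exp w * Real.exp w - 1) / Real.exp w := by
    field_simp
  rw [h]
  field_simp
  linear_combination (Real.exp w * Real.exp w) * (Real.exp w * Real.exp w - 1) ^ 2 * hw2

lemma contOn_inner (t x a b : ℝ) (ht : 0 < t) (hb : ∀ v ∈ Set.uIcc a b, v < x) :
    ContinuousOn (fun v => t ^ 2 * Real.exp (t * (x - v)) / (Real.exp (t * (x - v)) - 1) ^ 2)
      (Set.uIcc a b) := by
  apply ContinuousOn.div
  · fun_prop
  · fun_prop
  · intro v hv
    exact pow_ne_zero _ (ne_of_gt (exp_sub_one_pos' (mul_pos ht (by linarith [hb v hv]))))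

lemma key_id (t x : ℝ) (ht : 0 < t) (hx : 1 < x) :
    -Real.log (1 - Real.exp (-t * (x - Int.fract x)))
      = -Real.log (1 - Real.exp (-t * x)) + t / 2 / (Real.exp (t * x) - 1)
        + t * (Int.fract x - 1 / 2) / (Real.exp (t * x) - 1)
        + ∫ u in (0:ℝ)..Int.fract x,
            ∫ v in (0:ℝ)..u, KKer ((x - v) * t / 2) / (x - v) ^ 2 := by
  set θ := Int.fract x with hθ
  have hθ0 : 0 ≤ θ := Int.fract_nonneg x
  have hθ1 : θ < 1 := Int.fract_lt_one x
  have huIcc : Set.uIcc (0:ℝ) θ = Set.Icc 0 θ := Set.uIcc_of_le hθ0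
  set F : ℝ → ℝ := fun v => t / (Real.exp (t * (x - v)) - 1) with hF
  have inner_eq : ∀ u ∈ Set.uIcc (0:ℝ) θ,
      (∫ v in (0:ℝ)..u, KKer ((x - v) * t / 2) / (x - v) ^ 2) = F u - F 0 := by
    intro u hu
    rw [huIcc] at hu
    have hvlt : ∀ v ∈ Set.uIcc (0:ℝ) u, v < x := by
      intro v hv
      rw [Set.uIcc_of_le hu.1] at hv
      have := hu.2
      linarith [hv.2]
    have h1 : (∫ v in (0:ℝ)..u, KKer ((x - v) * t / 2) / (x - v) ^ 2)
        = ∫ v in (0:ℝ)..u, t ^ 2 * Real.exp (t * (x - v)) / (Real.exp (t * (x - v)) - 1) ^ 2 :=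
      intervalIntegral.integral_congr (fun v hv => KKer_eq t x ht (hvlt v hv))
    rw [h1]
    exact intervalIntegral.integral_eq_sub_of_hasDerivAt
      (fun v hv => hasDerivAt_inner t x ht (hvlt v hv))
      ((contOn_inner t x 0 u ht hvlt).intervalIntegrable)
  have hvltθ : ∀ v ∈ Set.uIcc (0:ℝ) θ, v < x := by
    intro v hv; rw [huIcc] at hv; linarith [hv.2]
  have hFcont : ContinuousOn F (Set.uIcc (0:ℝ) θ) := by
    apply ContinuousOn.div
    · fun_prop
    · fun_prop
    · intro v hv
      exact ne_of_gt (exp_sub_one_pos' (mul_pos ht (by linarith [hvltθ v hv])))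
  have outer : (∫ u in (0:ℝ)..θ,
      ∫ v in (0:ℝ)..u, KKer ((x - v) * t / 2) / (x - v) ^ 2)
      = (∫ u in (0:ℝ)..θ, F u) - θ * F 0 := by
    rw [intervalIntegral.integral_congr inner_eq,
      intervalIntegral.integral_sub hFcont.intervalIntegrable intervalIntegrable_const,
      intervalIntegral.integral_const]
    simp
  have ftc : (∫ u in (0:ℝ)..θ, F u)
      = -Real.log (1 - Real.exp (-t * (x - θ))) - -Real.log (1 - Real.exp (-t * (x - 0))) :=
    intervalIntegral.integral_eq_sub_of_hasDerivAt
      (fun u hu => hasDerivAt_g t x ht (hvltθ u hu)) hFcont.intervalIntegrable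
  rw [outer, ftc]
  have hD : Real.exp (t * x) - 1 ≠ 0 := ne_of_gt (exp_sub_one_pos' (by positivity))
  have hF0 : F 0 = t / (Real.exp (t * x) - 1) := by rw [hF]; norm_num
  rw [hF0]
  have hx0 : -t * (x - 0) = -t * x := by ring
  rw [hx0]
  field_simp
  ring

lemma summable_one_div_exp_sub_one {c : ℝ} (hc : 0 < c) (m : ℕ → ℝ)
    (hm : ∀ ℓ : ℕ, c * (ℓ + 1) ≤ m ℓ) :
    Summable fun ℓ : ℕ => 1 / (Real.exp (m ℓ) - 1) := by
  have hr : Real.exp (-c) < 1 := Real.exp_lt_one_iff.mpr (by linarith)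
  have hr0 : (0:ℝ) ≤ Real.exp (-c) := (Real.exp_pos _).le
  have hgeo0 : Summable (fun ℓ : ℕ => Real.exp (-c) ^ (ℓ + 1)) := by
    simpa [pow_succ] using (summable_geometric_of_lt_one hr0 hr).mul_right (Real.exp (-c))
  have hmpos : ∀ ℓ : ℕ, 0 < m ℓ := by
    intro ℓ
    refine lt_of_lt_of_le ?_ (hm ℓ)
    positivity
  refine Summable.of_nonneg_of_le (fun ℓ => ?_) (fun ℓ => ?_)
    (hgeo0.mul_left (1 - Real.exp (-c))⁻¹)
  · exact le_of_lt (div_pos one_pos (exp_sub_one_pos' (hmpos ℓ)))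
  · have hmge : c ≤ m ℓ := by
      refine le_trans ?_ (hm ℓ)
      nlinarith [Nat.cast_nonneg (α := ℝ) ℓ]
    have hlow : Real.exp (m ℓ) * (1 - Real.exp (-c)) ≤ Real.exp (m ℓ) - 1 := by
      have h1 : Real.exp (m ℓ) * Real.exp (-c) = Real.exp (m ℓ - c) := by
        rw [← Real.exp_add]; ring_nf
      have h2 : (1:ℝ) ≤ Real.exp (m ℓ - c) := Real.one_le_exp (by linarith)
      nlinarith [Real.exp_pos (m ℓ)]
    have hpos2 : 0 < Real.exp (m ℓ) * (1 - Real.exp (-c)) := by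
      have := one_sub_exp_pos' hc; positivity
    calc 1 / (Real.exp (m ℓ) - 1) ≤ 1 / (Real.exp (m ℓ) * (1 - Real.exp (-c))) :=
          one_div_le_one_div_of_le hpos2 hlow
      _ = (1 - Real.exp (-c))⁻¹ * Real.exp (-m ℓ) := by
          rw [one_div, mul_inv, Real.exp_neg, mul_comm]; rw [Real.exp_neg]
      _ ≤ (1 - Real.exp (-c))⁻¹ * Real.exp (-c) ^ (ℓ + 1) := by
          have hpow : Real.exp (-c) ^ (ℓ + 1) = Real.exp (-(c * (ℓ + 1))) := by
            rw [← Real.exp_nat_mul]; congr 1; push_cast; ring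
          rw [hpow]
          have hle : Real.exp (-m ℓ) ≤ Real.exp (-(c * (ℓ + 1))) :=
            Real.exp_le_exp.mpr (by linarith [hm ℓ])
          have h3 : (0:ℝ) ≤ (1 - Real.exp (-c))⁻¹ := by
            have := one_sub_exp_pos' hc; positivity
          exact mul_le_mul_of_nonneg_left hle h3

lemma neg_log_one_sub_exp_nonneg {s : ℝ} (hs : 0 < s) :
    0 ≤ -Real.log (1 - Real.exp (-s)) := by
  have h := one_sub_exp_pos' hs
  have : Real.log (1 - Real.exp (-s)) ≤ 0 :=
    Real.log_nonpos (by linarith) (by linarith [Real.exp_pos (-s)])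
  linarith

lemma neg_log_one_sub_exp_le {s : ℝ} (hs : 0 < s) :
    -Real.log (1 - Real.exp (-s)) ≤ 1 / (Real.exp s - 1) := by
  have hy : 0 < 1 - Real.exp (-s) := one_sub_exp_pos' hs
  rw [← Real.log_inv]
  have h2 : Real.log (1 - Real.exp (-s))⁻¹ ≤ (1 - Real.exp (-s))⁻¹ - 1 :=
    Real.log_le_sub_one_of_pos (by positivity)
  have h3 : (1 - Real.exp (-s))⁻¹ - 1 = 1 / (Real.exp s - 1) := by
    have h4 := Real.exp_ne_zero s
    have h5 : Real.exp s - 1 ≠ 0 := ne_of_gt (exp_sub_one_pos' hs)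
    rw [Real.exp_neg] at hy ⊢
    field_simp
    ring
  linarith

lemma summable_neg_log {c : ℝ} (hc : 0 < c) (m : ℕ → ℝ)
    (hm : ∀ ℓ : ℕ, c * (ℓ + 1) ≤ m ℓ) :
    Summable fun ℓ : ℕ => -Real.log (1 - Real.exp (-m ℓ)) := by
  have hmpos : ∀ ℓ : ℕ, 0 < m ℓ := by
    intro ℓ; refine lt_of_lt_of_le ?_ (hm ℓ); positivity
  exact Summable.of_nonneg_of_le (fun ℓ => neg_log_one_sub_exp_nonneg (hmpos ℓ))
    (fun ℓ => neg_log_one_sub_exp_le (hmpos ℓ)) (summable_one_div_exp_sub_one hc m hm)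

theorem stmt10 (α : ℝ) (hα : 1 < α) (hirr : Irrational α) (t : ℝ) (ht : 0 < t) :
    LBeatty α t = LOne (α * t) + t / 2 * DSum (α * t) + RBeatty α t + EBeatty α t := by
  have hx : ∀ ℓ : ℕ, 1 < α * ((ℓ : ℝ) + 1) := by
    intro ℓ
    have h1 : (1:ℝ) ≤ (ℓ : ℝ) + 1 := by
      have := Nat.cast_nonneg (α := ℝ) ℓ; linarith
    nlinarith
  set A : ℕ → ℝ := fun ℓ =>
    -Real.log (1 - Real.exp (-t * ((⌊α * ((ℓ : ℝ) + 1)⌋ : ℤ) : ℝ))) with hA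
  set B : ℕ → ℝ := fun ℓ => -Real.log (1 - Real.exp (-t * (α * ((ℓ : ℝ) + 1)))) with hB
  set C : ℕ → ℝ := fun ℓ => t / 2 / (Real.exp (t * (α * ((ℓ : ℝ) + 1))) - 1) with hC
  set R : ℕ → ℝ := fun ℓ =>
    t * (Int.fract (α * ((ℓ : ℝ) + 1)) - 1 / 2)
      / (Real.exp (t * (α * ((ℓ : ℝ) + 1))) - 1) with hR
  set E : ℕ → ℝ := fun ℓ =>
    ∫ u in (0:ℝ)..Int.fract (α * ((ℓ : ℝ) + 1)),
      ∫ v in (0:ℝ)..u, KKer ((α * ((ℓ : ℝ) + 1) - v) * t / 2)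
        / (α * ((ℓ : ℝ) + 1) - v) ^ 2 with hE
  have key : ∀ ℓ : ℕ, A ℓ = B ℓ + C ℓ + R ℓ + E ℓ := by
    intro ℓ
    have h := key_id t (α * ((ℓ : ℝ) + 1)) ht (hx ℓ)
    rw [Int.self_sub_fract] at h
    exact h
  have hSB : Summable B := by
    have := summable_neg_log (c := t * α) (by positivity)
      (fun ℓ : ℕ => t * (α * ((ℓ : ℝ) + 1))) (fun ℓ => le_of_eq (by ring))
    simpa [hB, neg_mul] using this
  have hSA : Summable A := by
    have hfl : ∀ ℓ : ℕ, (t * (α - 1)) * ((ℓ : ℝ) + 1)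
        ≤ t * ((⌊α * ((ℓ : ℝ) + 1)⌋ : ℤ) : ℝ) := by
      intro ℓ
      have h1 : α * ((ℓ : ℝ) + 1) - 1 < ((⌊α * ((ℓ : ℝ) + 1)⌋ : ℤ) : ℝ) :=
        Int.sub_one_lt_floor _
      have h2 : (α - 1) * ((ℓ : ℝ) + 1) ≤ α * ((ℓ : ℝ) + 1) - 1 := by
        nlinarith [Nat.cast_nonneg (α := ℝ) ℓ]
      nlinarith
    have := summable_neg_log (c := t * (α - 1)) (by nlinarith) _ hfl
    simpa [hA, neg_mul] using this
  have hSC : Summable C := by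
    have := (summable_one_div_exp_sub_one (c := t * α) (by positivity)
      (fun ℓ : ℕ => t * (α * ((ℓ : ℝ) + 1))) (fun ℓ => le_of_eq (by ring))).mul_left (t / 2)
    simpa [hC, mul_one_div, div_eq_mul_inv] using this
  have hSR : Summable R := by
    have hbase := (summable_one_div_exp_sub_one (c := t * α) (by positivity)
      (fun ℓ : ℕ => t * (α * ((ℓ : ℝ) + 1))) (fun ℓ => le_of_eq (by ring))).mul_left (t / 2)
    refine Summable.of_abs (Summable.of_nonneg_of_le (fun ℓ => abs_nonneg _)
      (fun ℓ => ?_) hbase)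
    have hDpos : 0 < Real.exp (t * (α * ((ℓ : ℝ) + 1))) - 1 :=
      exp_sub_one_pos' (by nlinarith [hx ℓ])
    rw [hR]
    rw [abs_div, abs_of_pos hDpos]
    have hnum : |t * (Int.fract (α * ((ℓ : ℝ) + 1)) - 1 / 2)| ≤ t / 2 := by
      rw [abs_mul, abs_of_pos ht]
      have hf0 := Int.fract_nonneg (α * ((ℓ : ℝ) + 1))
      have hf1 := Int.fract_lt_one (α * ((ℓ : ℝ) + 1))
      have : |Int.fract (α * ((ℓ : ℝ) + 1)) - 1 / 2| ≤ 1 / 2 := by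
        rw [abs_le]; constructor <;> [linarith; linarith]
      nlinarith
    calc |t * (Int.fract (α * ((ℓ : ℝ) + 1)) - 1 / 2)|
          / (Real.exp (t * (α * ((ℓ : ℝ) + 1))) - 1)
        ≤ (t / 2) / (Real.exp (t * (α * ((ℓ : ℝ) + 1))) - 1) := by
          gcongr
      _ = t / 2 * (1 / (Real.exp (t * (α * ((ℓ : ℝ) + 1))) - 1)) := by
          rw [mul_one_div]
  have hSE : Summable E := by
    have heq : E = fun ℓ => A ℓ - B ℓ - C ℓ - R ℓ := by
      funext ℓ; rw [key ℓ]; ring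
    rw [heq]
    exact ((hSA.sub hSB).sub hSC).sub hSR
  have hL : LBeatty α t = ∑' ℓ, A ℓ := by
    rw [LBeatty, ← tsum_neg]
  have hLOne : LOne (α * t) = ∑' ℓ, B ℓ := by
    rw [LOne, ← tsum_neg]
    refine tsum_congr fun ℓ => ?_
    have h : -(α * t) * ((ℓ : ℝ) + 1) = -t * (α * ((ℓ : ℝ) + 1)) := by ring
    rw [h]
  have hDS : t / 2 * DSum (α * t) = ∑' ℓ, C ℓ := by
    rw [DSum, ← tsum_mul_left]
    refine tsum_congr fun ℓ => ?_
    have h : ((ℓ : ℝ) + 1) * (α * t) = t * (α * ((ℓ : ℝ) + 1)) := by ring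
    rw [h, mul_one_div]
  have hRB : RBeatty α t = ∑' ℓ, R ℓ := rfl
  have hEB : EBeatty α t = ∑' ℓ, E ℓ := rfl
  rw [hL, hLOne, hDS, hRB, hEB, tsum_congr key,
    Summable.tsum_add ((hSB.add hSC).add hSR) hSE,
    Summable.tsum_add (hSB.add hSC) hSR, Summable.tsum_add hSB hSC]
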